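/- arXiv:2108.13199 — 3 statements merged into one kernel-verified Lean document; each statement's English description precedes it below -/
import Mathlib

section
/- The sum of (ln p)/p over primes p ≤ x equals ln x + O(1) as x → ∞. -/
open Finset Real

-- Stirling lower bound
lemma log_factorial_lower : ∀ n : ℕ, 1 ≤ n → (n : ℝ) * Real.log n - n + 1 ≤ Real.log n.factorial
  | 0, h => by omega
  | 1, _ => by simp
  | (n+2), _ => by
    have ih := log_factorial_lower (n+1) (by omega)
    have hpos : (0:ℝ) < (n+1:ℕ) := by positivity
    rw [Nat.factorial_succ, Nat.cast_mul, Real.log_mul (by positivity)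
      (by exact_mod_cast (Nat.factorial_pos (n+1)).ne')]
    have key : ((n+2:ℕ):ℝ) * Real.log (n+2:ℕ) - Real.log (n+2:ℕ) - ((n+1:ℕ):ℝ) * Real.log (n+1:ℕ) ≤ 1 := by
      have h1 : Real.log ((n+2:ℕ)/(n+1:ℕ) : ℝ) ≤ ((n+2:ℕ):ℝ)/(n+1:ℕ) - 1 :=
        Real.log_le_sub_one_of_pos (by positivity)
      have h2 : Real.log ((n+2:ℕ)/(n+1:ℕ) : ℝ) = Real.log (n+2:ℕ) - Real.log (n+1:ℕ) :=
        Real.log_div (by positivity : (0:ℝ) < ((n+2:ℕ):ℝ)).ne' hpos.ne'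
      have h3 : ((n+2:ℕ):ℝ)/(n+1:ℕ) - 1 = 1/(n+1:ℕ) := by
        rw [div_sub_one hpos.ne']; push_cast; ring_nf
      rw [h2, h3] at h1
      have : ((n+1:ℕ):ℝ) * (Real.log (n+2:ℕ) - Real.log (n+1:ℕ)) ≤ 1 := by
        rw [mul_comm, ← le_div_iff₀ hpos]; exact h1
      push_cast at this ⊢
      nlinarith [this]
    have hlog : Real.log (n+1+1 : ℝ) = Real.log ((n+2:ℕ):ℝ) := by congr 1; push_cast; ring
    push_cast at ih key ⊢
    rw [hlog] at *
    push_cast at *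
    linarith

lemma log_factorial_upper (n : ℕ) : Real.log n.factorial ≤ (n : ℝ) * Real.log n := by
  calc Real.log n.factorial ≤ Real.log ((n:ℝ)^n) := by
        apply Real.log_le_log (by exact_mod_cast Nat.factorial_pos n)
        exact_mod_cast Nat.factorial_le_pow n
    _ = (n:ℝ) * Real.log n := by rw [Real.log_pow]

lemma step_lemma (n : ℕ) (hn : 1 ≤ n) :
    Real.log ((n:ℝ)+1) / ((n:ℝ)+1)^2 ≤ 4 * (1/Real.sqrt n - 1/Real.sqrt ((n:ℝ)+1)) := by
  set a := Real.sqrt ((n:ℝ)+1) with hadef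
  set b := Real.sqrt n with hbdef
  have hb1 : 1 ≤ b := by
    rw [show (1:ℝ) = Real.sqrt 1 by simp, hbdef]
    exact Real.sqrt_le_sqrt (by exact_mod_cast hn)
  have hb0 : (0:ℝ) < b := lt_of_lt_of_le one_pos hb1
  have ha2 : a^2 = (n:ℝ)+1 := Real.sq_sqrt (by positivity)
  have hb2 : b^2 = (n:ℝ) := Real.sq_sqrt (by positivity)
  have hba : b ≤ a := Real.sqrt_le_sqrt (by linarith)
  have ha0 : (0:ℝ) < a := lt_of_lt_of_le hb0 hba
  have hlog : Real.log ((n:ℝ)+1) ≤ 2*a := by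
    have h1 := Real.log_le_sub_one_of_pos ha0
    have h2 : Real.log ((n:ℝ)+1) = 2 * Real.log a := by
      rw [← ha2, Real.log_pow]; push_cast; ring
    linarith
  have key : 2*(a*b*(a+b)) ≤ 4*a^3 := by nlinarith
  have hab : (a-b)*(a+b) = 1 := by nlinarith
  have e1 : 1/b - 1/a = 1/(a*b*(a+b)) := by
    rw [div_sub_div _ _ hb0.ne' ha0.ne', div_eq_div_iff (by positivity) (by positivity)]
    linear_combination (a*b) * hab
  rw [e1]
  have c1 : Real.log ((n:ℝ)+1) / ((n:ℝ)+1)^2 ≤ 2*a/((n:ℝ)+1)^2 := by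
    gcongr
  have c2 : 2*a/((n:ℝ)+1)^2 = 2/a^3 := by
    rw [← ha2]
    field_simp
    try ring
  have c3 : 2/a^3 ≤ 4*(1/(a*b*(a+b))) := by
    rw [mul_one_div, div_le_div_iff₀ (by positivity) (by positivity)]
    nlinarith
  linarith [c1, c2 ▸ c1]

lemma sum_log_div_sq_le (n : ℕ) : ∑ m ∈ Finset.Icc 2 n, Real.log m / (m:ℝ)^2 ≤ 4 := by
  have H : ∀ k : ℕ, 1 ≤ k → ∑ m ∈ Finset.Icc 2 k, Real.log m / (m:ℝ)^2 ≤ 4 - 4/Real.sqrt k := by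
    intro k hk
    induction k with
    | zero => omega
    | succ k ih =>
      rcases Nat.eq_or_lt_of_le hk with h1 | h1
      · simp [← h1]
      · have hk1 : 1 ≤ k := by omega
        have ihk := ih hk1
        rw [Finset.sum_Icc_succ_top (by omega)]
        have hstep := step_lemma k hk1
        have hc : ((k+1:ℕ):ℝ) = (k:ℝ)+1 := by push_cast; ring
        rw [hc]
        have heq : 4*(1/Real.sqrt k - 1/Real.sqrt ((k:ℝ)+1))
            = 4/Real.sqrt k - 4/Real.sqrt ((k:ℝ)+1) := by ring
        rw [heq] at hstep
        linarith
  rcases Nat.lt_or_ge n 1 with h | h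
  · interval_cases n <;> simp
  · have := H n h
    have : (0:ℝ) < Real.sqrt n := Real.sqrt_pos.mpr (by exact_mod_cast h)
    have h4 : 4/Real.sqrt n ≥ 0 := by positivity
    linarith [H n h]

lemma fac_lower {p n : ℕ} (hp : p.Prime) (hpn : p ≤ n) :
    n / p ≤ n.factorial.factorization p := by
  haveI : Fact p.Prime := ⟨hp⟩
  rw [Nat.factorization_def _ hp,
    padicValNat_factorial (Nat.lt_succ_self (Nat.log p n))]
  have h1 : 1 ∈ Finset.Ico 1 (Nat.log p n + 1) := by
    simp only [Finset.mem_Ico]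
    refine ⟨le_refl _, ?_⟩
    have : 1 ≤ Nat.log p n := by
      rw [Nat.le_log_iff_pow_le hp.one_lt (by have := hp.two_le; omega)]
      simpa using hpn
    omega
  calc n / p = n / p ^ 1 := by rw [pow_one]
    _ ≤ _ := Finset.single_le_sum (f := fun i => n / p ^ i) (fun i _ => Nat.zero_le _) h1

lemma fac_upper {p n : ℕ} (hp : p.Prime) :
    ((n.factorial.factorization p : ℕ) : ℝ) ≤ (n:ℝ)/p + 2*n/p^2 := by
  haveI : Fact p.Prime := ⟨hp⟩
  have hp2 : (2:ℝ) ≤ p := by exact_mod_cast hp.two_le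
  have hp0 : (0:ℝ) < p := by linarith
  rw [Nat.factorization_def _ hp,
    padicValNat_factorial (Nat.lt_succ_self (Nat.log p n))]
  set b := Nat.log p n + 1 with hb
  have cast_le : ((∑ i ∈ Finset.Ico 1 b, n / p ^ i : ℕ) : ℝ)
      ≤ ∑ i ∈ Finset.Ico 1 b, (n:ℝ)/(p:ℝ)^i := by
    push_cast
    apply Finset.sum_le_sum
    intro i _
    calc ((n / p ^ i : ℕ) : ℝ) ≤ (n:ℝ)/((p^i : ℕ):ℝ) := Nat.cast_div_le
      _ = (n:ℝ)/(p:ℝ)^i := by push_cast; ring_nf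
  refine cast_le.trans ?_
  rcases le_or_gt b 1 with hb1 | hb1
  · rw [Finset.Ico_eq_empty (by omega)]
    simp only [Finset.sum_empty]
    positivity
  · rw [Finset.sum_eq_sum_Ico_succ_bot hb1]
    have tail : ∑ i ∈ Finset.Ico 2 b, (n:ℝ)/(p:ℝ)^i ≤ 2*n/p^2 := by
      have e : ∀ i, (n:ℝ)/(p:ℝ)^i = (n:ℝ) * (1/(p:ℝ))^i := by
        intro i; rw [one_div, inv_pow]; ring
      simp only [e]
      rw [← Finset.mul_sum]
      have hgeom : ∑ i ∈ Finset.Ico 2 b, (1/(p:ℝ))^i ≤ (1/(p:ℝ))^2 / (1 - 1/(p:ℝ)) :=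
        geom_sum_Ico_le_of_lt_one (by positivity) (by rw [div_lt_one hp0]; linarith)
      have hhalf : (1:ℝ)/2 ≤ 1 - 1/(p:ℝ) := by
        have : 1/(p:ℝ) ≤ 1/2 := by
          apply div_le_div_of_nonneg_left (by norm_num) (by norm_num) hp2
        linarith
      have h2 : (1/(p:ℝ))^2 / (1 - 1/(p:ℝ)) ≤ (1/(p:ℝ))^2 / (1/2) := by
        gcongr
      have h3 : (1/(p:ℝ))^2 / (1/2 : ℝ) = 2/(p:ℝ)^2 := by
        field_simp
      have hn0 : (0:ℝ) ≤ n := Nat.cast_nonneg n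
      calc (n:ℝ) * ∑ i ∈ Finset.Ico 2 b, (1/(p:ℝ))^i
          ≤ (n:ℝ) * (2/(p:ℝ)^2) := by
            apply mul_le_mul_of_nonneg_left _ hn0
            rw [← h3]; exact hgeom.trans h2
        _ = 2*n/p^2 := by ring
    have hfirst : (n:ℝ)/(p:ℝ)^1 = (n:ℝ)/p := by rw [pow_one]
    rw [hfirst]
    linarith

lemma log_factorial_eq (n : ℕ) :
    Real.log n.factorial
      = ∑ p ∈ (Finset.range (n+1)).filter Nat.Prime,
          (n.factorial.factorization p : ℝ) * Real.log p := by
  have hsupp : n.factorial.factorization.support ⊆ (Finset.range (n+1)).filter Nat.Prime := by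
    intro p hp
    rw [Nat.support_factorization] at hp
    have hp' := Nat.prime_of_mem_primeFactors hp
    have hdvd := Nat.dvd_of_mem_primeFactors hp
    have hle := (Nat.Prime.dvd_factorial hp').mp hdvd
    rw [Finset.mem_filter, Finset.mem_range]
    exact ⟨by omega, hp'⟩
  conv_lhs => rw [← Nat.factorization_prod_pow_eq_self (Nat.factorial_pos n).ne']
  rw [Finsupp.prod]
  push_cast
  rw [Real.log_prod (fun p hp => by
    have hp' : p.Prime := Nat.prime_of_mem_primeFactors (by rwa [Nat.support_factorization] at hp)
    exact pow_ne_zero _ (by exact_mod_cast hp'.pos.ne'))]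
  have hcongr : ∀ s : Finset ℕ,
      ∑ p ∈ s, Real.log ((p:ℝ) ^ n.factorial.factorization p)
        = ∑ p ∈ s, (n.factorial.factorization p : ℝ) * Real.log p :=
    fun s => Finset.sum_congr rfl (fun p _ => by rw [Real.log_pow])
  rw [hcongr]
  exact Finset.sum_subset hsupp (fun p hp hnp => by
    have h0 : n.factorial.factorization p = 0 := Finsupp.notMem_support_iff.mp hnp
    simp [h0])

lemma theta_le (n : ℕ) :
    ∑ p ∈ (Finset.range (n+1)).filter Nat.Prime, Real.log p ≤ (n:ℝ) * Real.log 4 := by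
  have h1 : ∑ p ∈ (Finset.range (n+1)).filter Nat.Prime, Real.log p
      = Real.log (primorial n) := by
    rw [primorial, Nat.cast_prod, Real.log_prod]
    intro p hp
    have hp' := (Finset.mem_filter.mp hp).2
    exact_mod_cast hp'.pos.ne'
  rw [h1]
  calc Real.log (primorial n) ≤ Real.log ((4^n : ℕ)) := by
        apply Real.log_le_log (by exact_mod_cast primorial_pos n)
        exact_mod_cast primorial_le_4_pow n
    _ = (n:ℝ) * Real.log 4 := by
        push_cast
        rw [Real.log_pow]

theorem mertens_first :
    ∃ C : ℝ, ∀ x : ℝ, 2 ≤ x →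
      |(∑ p ∈ (Finset.range (⌊x⌋₊ + 1)).filter Nat.Prime, Real.log p / p) - Real.log x| ≤ C := by
  refine ⟨13, fun x hx => ?_⟩
  set n := ⌊x⌋₊ with hn
  have hn2 : 2 ≤ n := Nat.le_floor (by exact_mod_cast hx)
  have hn0 : (0:ℝ) < n := by exact_mod_cast Nat.lt_of_lt_of_le Nat.zero_lt_two hn2
  have hn2R : (2:ℝ) ≤ n := by exact_mod_cast hn2
  set P := (Finset.range (n+1)).filter Nat.Prime with hP
  set S := ∑ p ∈ P, Real.log p / p with hS
  have hprime : ∀ p ∈ P, p.Prime := fun p hp => (Finset.mem_filter.mp hp).2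
  have hple : ∀ p ∈ P, p ≤ n := fun p hp => by
    have := Finset.mem_range.mp (Finset.mem_filter.mp hp).1; omega
  -- lower bound on log n!
  have hlow : (n:ℝ) * S - (n:ℝ) * Real.log 4 ≤ Real.log n.factorial := by
    rw [log_factorial_eq]
    have hterm : ∀ p ∈ P, (n:ℝ)/p * Real.log p - Real.log p
        ≤ (n.factorial.factorization p : ℝ) * Real.log p := by
      intro p hp
      have hpp := hprime p hp
      have hp2 : (2:ℝ) ≤ p := by exact_mod_cast hpp.two_le
      have hp0 : (0:ℝ) < p := by linarith
      have hlogp : 0 ≤ Real.log p := Real.log_nonneg (by linarith)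
      have h1 : (n:ℝ)/p - 1 ≤ ((n.factorial.factorization p : ℕ) : ℝ) := by
        have h2 : n / p ≤ n.factorial.factorization p := fac_lower hpp (hple p hp)
        have h2' : ((n/p : ℕ):ℝ) ≤ ((n.factorial.factorization p : ℕ):ℝ) := by exact_mod_cast h2
        have hdm : p * (n / p) + n % p = n := Nat.div_add_mod n p
        have hmod : n % p < p := Nat.mod_lt _ hpp.pos
        have hcast : (p:ℝ) * ((n/p : ℕ):ℝ) + ((n % p : ℕ):ℝ) = (n:ℝ) := by exact_mod_cast hdm
        have hmodR : ((n % p : ℕ):ℝ) < p := by exact_mod_cast hmod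
        have h3 : (n:ℝ)/p < ((n/p : ℕ):ℝ) + 1 := by
          rw [div_lt_iff₀ hp0]
          nlinarith
        linarith
      nlinarith [h1, hlogp]
    have hsum : ∑ p ∈ P, ((n:ℝ)/p * Real.log p - Real.log p)
        = (n:ℝ) * S - ∑ p ∈ P, Real.log p := by
      rw [Finset.sum_sub_distrib, hS, Finset.mul_sum]
      congr 1
      exact Finset.sum_congr rfl fun p _ => by ring
    have htheta := theta_le n
    calc (n:ℝ) * S - (n:ℝ) * Real.log 4
        ≤ ∑ p ∈ P, ((n:ℝ)/p * Real.log p - Real.log p) := by rw [hsum]; linarith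
      _ ≤ _ := Finset.sum_le_sum hterm
  -- upper bound on log n!
  have hK : ∑ p ∈ P, Real.log p / (p:ℝ)^2 ≤ 4 := by
    refine le_trans ?_ (sum_log_div_sq_le n)
    apply Finset.sum_le_sum_of_subset_of_nonneg
    · intro p hp
      rw [Finset.mem_Icc]
      exact ⟨(hprime p hp).two_le, hple p hp⟩
    · intro m hm _
      rw [Finset.mem_Icc] at hm
      have : (1:ℝ) ≤ m := by exact_mod_cast le_trans one_le_two hm.1
      have hlog : 0 ≤ Real.log m := Real.log_nonneg this
      positivity
  have hup : Real.log n.factorial ≤ (n:ℝ) * S + 8 * n := by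
    rw [log_factorial_eq]
    have hterm : ∀ p ∈ P, (n.factorial.factorization p : ℝ) * Real.log p
        ≤ (n:ℝ) * (Real.log p / p) + 2 * n * (Real.log p / (p:ℝ)^2) := by
      intro p hp
      have hpp := hprime p hp
      have hp2 : (2:ℝ) ≤ p := by exact_mod_cast hpp.two_le
      have hp0 : (0:ℝ) < p := by linarith
      have hlogp : 0 ≤ Real.log p := Real.log_nonneg (by linarith)
      have h1 := fac_upper (n := n) hpp
      have h2 : ((n.factorial.factorization p : ℕ):ℝ) * Real.log p
          ≤ ((n:ℝ)/p + 2*n/(p:ℝ)^2) * Real.log p := mul_le_mul_of_nonneg_right h1 hlogp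
      calc ((n.factorial.factorization p : ℕ):ℝ) * Real.log p
          ≤ ((n:ℝ)/p + 2*n/(p:ℝ)^2) * Real.log p := h2
        _ = (n:ℝ) * (Real.log p / p) + 2 * n * (Real.log p / (p:ℝ)^2) := by ring
    calc ∑ p ∈ P, (n.factorial.factorization p : ℝ) * Real.log p
        ≤ ∑ p ∈ P, ((n:ℝ) * (Real.log p / p) + 2 * n * (Real.log p / (p:ℝ)^2)) :=
          Finset.sum_le_sum hterm
      _ = (n:ℝ) * S + 2 * n * ∑ p ∈ P, Real.log p / (p:ℝ)^2 := by
          rw [Finset.sum_add_distrib, ← Finset.mul_sum, ← Finset.mul_sum, hS]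
      _ ≤ (n:ℝ) * S + 8 * n := by nlinarith
  -- Stirling
  have hst1 : (n:ℝ) * Real.log n - n + 1 ≤ Real.log n.factorial :=
    log_factorial_lower n (by omega)
  have hst2 : Real.log n.factorial ≤ (n:ℝ) * Real.log n := log_factorial_upper n
  -- divide by n
  have hS_up : S ≤ Real.log n + Real.log 4 := by
    have h : (n:ℝ) * S ≤ (n:ℝ) * (Real.log n + Real.log 4) := by nlinarith
    exact le_of_mul_le_mul_left h hn0
  have hS_low : Real.log n - 9 ≤ S := by
    have h : (n:ℝ) * (Real.log n - 9) ≤ (n:ℝ) * S := by nlinarith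
    exact le_of_mul_le_mul_left h hn0
  -- compare log x and log n
  have hxn : (n:ℝ) ≤ x := Nat.floor_le (by linarith)
  have hxn2 : x < (n:ℝ) + 1 := Nat.lt_floor_add_one x
  have hlogxn : Real.log n ≤ Real.log x := Real.log_le_log hn0 hxn
  have hlogx2 : Real.log x ≤ Real.log 2 + Real.log n := by
    rw [← Real.log_mul two_ne_zero hn0.ne']
    exact Real.log_le_log (by linarith) (by linarith)
  have hlog2 : Real.log 2 ≤ 1 := by linarith [Real.log_le_sub_one_of_pos (by norm_num : (0:ℝ) < 2)]
  have hlog4 : Real.log 4 ≤ 3 := by linarith [Real.log_le_sub_one_of_pos (by norm_num : (0:ℝ) < 4)]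
  have hlog4' : 0 ≤ Real.log 4 := Real.log_nonneg (by norm_num)
  rw [abs_le]
  constructor <;> linarith
end

section
/- If an additive arithmetic function f satisfies f(m) = O(ln m), then ∑_{p^α ≤ n, α ≥ 1} f(p^α)/p^α = ∑_{p ≤ n} f(p)/p + O(1) as n → ∞. -/
def ppow (n : ℕ) : Finset (ℕ × ℕ) :=
  (Finset.range (n+1) ×ˢ Finset.range (n+1)).filter
    (fun q => q.1.Prime ∧ 1 ≤ q.2 ∧ q.1 ^ q.2 ≤ n)

def primesLE (n : ℕ) : Finset ℕ := (Finset.range (n+1)).filter Nat.Prime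

theorem additive_mean_reduction (f : ℕ → ℝ)
    (hadd : ∀ a b : ℕ, Nat.Coprime a b → f (a * b) = f a + f b)
    (hbound : ∃ C : ℝ, ∀ m : ℕ, 2 ≤ m → |f m| ≤ C * Real.log m) :
    ∃ C : ℝ, ∀ n : ℕ, 2 ≤ n →
      |(∑ q ∈ ppow n, f (q.1 ^ q.2) / (q.1 : ℝ) ^ q.2)
        - ∑ p ∈ primesLE n, f p / p| ≤ C := by
  obtain ⟨C0, hC0⟩ := hbound
  set C' : ℝ := max C0 0 with hC'def
  have hC'0 : 0 ≤ C' := le_max_right _ _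
  have hf : ∀ m : ℕ, 2 ≤ m → |f m| ≤ C' * Real.log m := by
    intro m hm
    refine (hC0 m hm).trans (mul_le_mul_of_nonneg_right (le_max_left _ _) ?_)
    exact Real.log_nonneg (by exact_mod_cast Nat.one_le_iff_ne_zero.mpr (by omega))
  set w : ℝ := (2:ℝ) ^ (-(3/4 : ℝ)) with hwdef
  have hw0 : 0 < w := Real.rpow_pos_of_pos (by norm_num) _
  have hw1 : w < 1 := Real.rpow_lt_one_of_one_lt_of_neg (by norm_num) (by norm_num)
  set S : ℝ := ∑' m : ℕ, (m:ℝ) ^ (-(3/2 : ℝ)) with hSdef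
  set B : ℝ := (w^2)⁻¹ * (1 - w)⁻¹ with hBdef
  have hB0 : 0 ≤ B := by
    apply mul_nonneg (inv_nonneg.2 (by positivity)) (inv_nonneg.2 (by linarith))
  refine ⟨4 * C' * B * S, ?_⟩
  intro n hn
  -- split the sum
  have hsplit := (Finset.sum_filter_add_sum_filter_not (ppow n) (fun q => q.2 = 1)
    (fun q => f (q.1 ^ q.2) / (q.1 : ℝ) ^ q.2)).symm
  have h1 : ∑ q ∈ (ppow n).filter (fun q => q.2 = 1), f (q.1 ^ q.2) / (q.1 : ℝ) ^ q.2
      = ∑ p ∈ primesLE n, f p / p := by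
    refine Finset.sum_nbij' (fun q => q.1) (fun p => (p, 1)) ?_ ?_ ?_ ?_ ?_
    · intro q hq
      simp only [ppow, Finset.mem_filter, Finset.mem_product, Finset.mem_range] at hq
      obtain ⟨⟨⟨_, _⟩, hp, _, hle⟩, h2⟩ := hq
      simp only [primesLE, Finset.mem_filter, Finset.mem_range]
      refine ⟨?_, hp⟩
      have : q.1 ^ q.2 = q.1 := by rw [h2, pow_one]
      omega
    · intro p hp
      simp only [primesLE, Finset.mem_filter, Finset.mem_range] at hp
      simp only [ppow, Finset.mem_filter, Finset.mem_product, Finset.mem_range]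
      exact ⟨⟨⟨hp.1, by omega⟩, hp.2, le_refl 1, by simpa using Nat.lt_succ_iff.mp hp.1⟩, trivial⟩
    · intro q hq
      simp only [Finset.mem_filter] at hq
      exact Prod.ext rfl hq.2.symm
    · intro p _; rfl
    · intro q hq
      simp only [Finset.mem_filter] at hq
      rw [hq.2, pow_one, pow_one]
  set T := (ppow n).filter (fun q => ¬ q.2 = 1) with hTdef
  have hdiff : (∑ q ∈ ppow n, f (q.1 ^ q.2) / (q.1 : ℝ) ^ q.2)
      - ∑ p ∈ primesLE n, f p / p = ∑ q ∈ T, f (q.1 ^ q.2) / (q.1 : ℝ) ^ q.2 := by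
    rw [hsplit, h1]; ring
  rw [hdiff]
  -- basic facts on members of T
  have hmemT : ∀ q ∈ T, q.1.Prime ∧ 2 ≤ q.2 ∧ q.1 ^ q.2 ≤ n := by
    intro q hq
    simp only [hTdef, ppow, Finset.mem_filter, Finset.mem_product, Finset.mem_range] at hq
    exact ⟨hq.1.2.1, by omega, hq.1.2.2.2⟩
  -- per-term bound
  have key : ∀ q ∈ T, |f (q.1 ^ q.2) / (q.1 : ℝ) ^ q.2|
      ≤ 4 * C' * ((q.1:ℝ) ^ (-(3/4:ℝ))) ^ q.2 := by
    intro q hq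
    obtain ⟨hp, hα, hle⟩ := hmemT q hq
    have hp2 : 2 ≤ q.1 := hp.two_le
    have hm2 : 2 ≤ q.1 ^ q.2 := le_trans hp2 (Nat.le_self_pow (by omega) _)
    have hmpos : (0:ℝ) < ((q.1 ^ q.2 : ℕ) : ℝ) := by positivity
    have hcast : ((q.1 ^ q.2 : ℕ) : ℝ) = (q.1 : ℝ) ^ q.2 := by push_cast; ring
    have hppos : (0:ℝ) < (q.1 : ℝ) ^ q.2 := hcast ▸ hmpos
    rw [abs_div, abs_of_pos hppos, div_le_iff₀ hppos]
    have hlog : |f (q.1 ^ q.2)| ≤ C' * Real.log ((q.1 ^ q.2 : ℕ) : ℝ) := hf _ hm2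
    have hlog2 : Real.log ((q.1 ^ q.2 : ℕ) : ℝ)
        ≤ ((q.1 ^ q.2 : ℕ) : ℝ) ^ (1/4 : ℝ) / (1/4 : ℝ) :=
      Real.log_le_rpow_div (le_of_lt hmpos) (by norm_num)
    have step1 : |f (q.1 ^ q.2)| ≤ C' * (4 * ((q.1 ^ q.2 : ℕ) : ℝ) ^ (1/4 : ℝ)) := by
      refine hlog.trans (mul_le_mul_of_nonneg_left ?_ hC'0)
      refine hlog2.trans (le_of_eq ?_); ring
    refine step1.trans ?_
    have hrw : ((q.1:ℝ) ^ (-(3/4:ℝ))) ^ q.2 * ((q.1 : ℝ) ^ q.2)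
        = ((q.1 ^ q.2 : ℕ) : ℝ) ^ (1/4 : ℝ) := by
      rw [hcast]
      rw [← Real.rpow_natCast ((q.1:ℝ) ^ (-(3/4:ℝ))) q.2, ← Real.rpow_natCast (q.1:ℝ) q.2,
        ← Real.rpow_mul (by positivity), ← Real.rpow_mul (by positivity),
        ← Real.rpow_add (by positivity : (0:ℝ) < (q.1:ℝ))]
      ring_nf
    rw [mul_assoc, hrw]; ring_nf; rfl
  -- sum the bound
  have habs : |∑ q ∈ T, f (q.1 ^ q.2) / (q.1 : ℝ) ^ q.2|
      ≤ ∑ q ∈ T, 4 * C' * ((q.1:ℝ) ^ (-(3/4:ℝ))) ^ q.2 :=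
    (Finset.abs_sum_le_sum_abs _ _).trans (Finset.sum_le_sum key)
  refine habs.trans ?_
  rw [← Finset.mul_sum]
  have hsub : T ⊆ primesLE n ×ˢ Finset.Icc 2 n := by
    intro q hq
    obtain ⟨hp, hα, hle⟩ := hmemT q hq
    have hp2 : 2 ≤ q.1 := hp.two_le
    have hq1 : q.1 ≤ n := le_trans (Nat.le_self_pow (by omega) _) hle
    have hq2 : q.2 ≤ n := by
      have h1 : 2 ^ q.2 ≤ q.1 ^ q.2 := Nat.pow_le_pow_left hp2 _
      have h2 : q.2 < 2 ^ q.2 := Nat.lt_two_pow_self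
      omega
    simp only [Finset.mem_product, primesLE, Finset.mem_filter, Finset.mem_range, Finset.mem_Icc]
    exact ⟨⟨by omega, hp⟩, hα, hq2⟩
  have hmono : ∑ q ∈ T, ((q.1:ℝ) ^ (-(3/4:ℝ))) ^ q.2
      ≤ ∑ q ∈ primesLE n ×ˢ Finset.Icc 2 n, ((q.1:ℝ) ^ (-(3/4:ℝ))) ^ q.2 := by
    refine Finset.sum_le_sum_of_subset_of_nonneg hsub ?_
    intro q _ _; positivity
  have hgeom : Summable (fun j : ℕ => w ^ j) := summable_geometric_of_lt_one (le_of_lt hw0) hw1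
  have hinner : ∀ p ∈ primesLE n, ∑ α ∈ Finset.Icc 2 n, ((p:ℝ) ^ (-(3/4:ℝ))) ^ α
      ≤ (p:ℝ) ^ (-(3/2:ℝ)) * B := by
    intro p hp
    simp only [primesLE, Finset.mem_filter, Finset.mem_range] at hp
    have hp2 : (2:ℝ) ≤ (p:ℝ) := by exact_mod_cast hp.2.two_le
    set y : ℝ := (p:ℝ) ^ (-(3/4:ℝ)) with hydef
    have hy0 : 0 < y := Real.rpow_pos_of_pos (by linarith) _
    have hyw : y ≤ w := by
      rw [hydef, hwdef, Real.rpow_neg (by linarith), Real.rpow_neg (by norm_num)]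
      exact inv_anti₀ (Real.rpow_pos_of_pos (by norm_num) _)
        (Real.rpow_le_rpow (by norm_num) hp2 (by norm_num))
    have hterm : ∀ α ∈ Finset.Icc 2 n, y ^ α ≤ y^2 * (w^2)⁻¹ * w ^ α := by
      intro α hα
      have h2α : 2 ≤ α := (Finset.mem_Icc.mp hα).1
      have : y ^ α = y^2 * y^(α - 2) := by
        rw [← pow_add]; congr 1; omega
      rw [this]
      have hw' : w ^ α = w^2 * w^(α-2) := by
        rw [← pow_add]; congr 1; omega
      calc y^2 * y^(α-2) ≤ y^2 * w^(α-2) :=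
            mul_le_mul_of_nonneg_left (pow_le_pow_left₀ (le_of_lt hy0) hyw _) (by positivity)
        _ = y^2 * (w^2)⁻¹ * w ^ α := by
            rw [hw']; field_simp
    refine (Finset.sum_le_sum hterm).trans ?_
    rw [← Finset.mul_sum]
    have hsum : ∑ α ∈ Finset.Icc 2 n, w ^ α ≤ (1 - w)⁻¹ := by
      have := hgeom.sum_le_tsum (Finset.Icc 2 n) (fun i _ => by positivity)
      rwa [tsum_geometric_of_lt_one (le_of_lt hw0) hw1] at this
    have hy2 : y^2 = (p:ℝ) ^ (-(3/2:ℝ)) := by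
      rw [hydef, ← Real.rpow_natCast ((p:ℝ) ^ (-(3/4:ℝ))) 2, ← Real.rpow_mul (by linarith)]
      norm_num
    calc y^2 * (w^2)⁻¹ * ∑ α ∈ Finset.Icc 2 n, w ^ α
        ≤ y^2 * (w^2)⁻¹ * (1 - w)⁻¹ := by
          refine mul_le_mul_of_nonneg_left hsum (by positivity)
      _ = (p:ℝ) ^ (-(3/2:ℝ)) * B := by rw [hy2, hBdef]; ring
  have hSsummable : Summable (fun m : ℕ => (m:ℝ) ^ (-(3/2:ℝ))) :=
    Real.summable_nat_rpow.mpr (by norm_num)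
  have houter : ∑ p ∈ primesLE n, (p:ℝ) ^ (-(3/2:ℝ)) ≤ S :=
    hSsummable.sum_le_tsum (primesLE n) (fun i _ => Real.rpow_nonneg (Nat.cast_nonneg i) _)
  have hfinal : ∑ q ∈ primesLE n ×ˢ Finset.Icc 2 n, ((q.1:ℝ) ^ (-(3/4:ℝ))) ^ q.2 ≤ B * S := by
    rw [Finset.sum_product]
    calc ∑ p ∈ primesLE n, ∑ α ∈ Finset.Icc 2 n, ((p:ℝ) ^ (-(3/4:ℝ))) ^ α
        ≤ ∑ p ∈ primesLE n, (p:ℝ) ^ (-(3/2:ℝ)) * B := Finset.sum_le_sum hinner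
      _ = (∑ p ∈ primesLE n, (p:ℝ) ^ (-(3/2:ℝ))) * B := by rw [Finset.sum_mul]
      _ ≤ S * B := mul_le_mul_of_nonneg_right houter hB0
      _ = B * S := mul_comm _ _
  calc (4 * C') * ∑ q ∈ T, ((q.1:ℝ) ^ (-(3/4:ℝ))) ^ q.2
      ≤ (4 * C') * ∑ q ∈ primesLE n ×ˢ Finset.Icc 2 n, ((q.1:ℝ) ^ (-(3/4:ℝ))) ^ q.2 :=
        mul_le_mul_of_nonneg_left hmono (by positivity)
    _ ≤ (4 * C') * (B * S) := mul_le_mul_of_nonneg_left hfinal (by positivity)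
    _ = 4 * C' * B * S := by ring
end

section
/- If an additive arithmetic function f satisfies f(m) = O(ln m), then ∑_{p^α ≤ n, α ≥ 1} f(p^α)²/p^α = ∑_{p ≤ n} f(p)²/p + O(1) as n → ∞. -/
theorem pbound (p a : ℕ) (hp : 2 ≤ p) (ha : 2 ≤ a) :
    ((p:ℝ)^a) ^ (-(3:ℝ)/4) ≤ (p:ℝ)^(-(3:ℝ)/2) * ((2:ℝ)^((3:ℝ)/2) * ((2:ℝ)^(-(3:ℝ)/4))^a) := by
  have hp0 : (0:ℝ) < p := by positivity
  have h2p : (2:ℝ) ≤ p := by exact_mod_cast hp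
  have ha2 : (2:ℝ) ≤ a := by exact_mod_cast ha
  rw [← Real.rpow_natCast (p:ℝ) a, ← Real.rpow_mul hp0.le,
      ← Real.rpow_natCast ((2:ℝ)^(-(3:ℝ)/4)) a, ← Real.rpow_mul (by norm_num : (0:ℝ) ≤ 2),
      ← Real.rpow_add (by norm_num : (0:ℝ) < 2)]
  have key : (p:ℝ) ^ ((a:ℝ) * (-3/4)) = (p:ℝ)^(-(3:ℝ)/2) * (p:ℝ) ^ (-((3:ℝ)/4 * ((a:ℝ) - 2))) := by
    rw [← Real.rpow_add hp0]; ring_nf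
  have key2 : (3:ℝ)/2 + -(3:ℝ)/4 * (a:ℝ) = -((3:ℝ)/4 * ((a:ℝ) - 2)) := by ring
  rw [key, key2]
  refine mul_le_mul_of_nonneg_left ?_ (Real.rpow_nonneg hp0.le _)
  rw [Real.rpow_neg hp0.le, Real.rpow_neg (by norm_num : (0:ℝ) ≤ 2),
      ← Real.inv_rpow hp0.le, ← Real.inv_rpow (by norm_num : (0:ℝ) ≤ 2)]
  exact Real.rpow_le_rpow (by positivity) (by rw [inv_le_inv₀ hp0 (by norm_num)]; exact h2p)
    (by nlinarith)

theorem termbound (C : ℝ) (hC : 0 ≤ C) (f : ℕ → ℝ)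
    (hf : ∀ m : ℕ, 2 ≤ m → |f m| ≤ C * Real.log m)
    (p a : ℕ) (hp : 2 ≤ p) (ha : 2 ≤ a) :
    f (p^a)^2 / (p:ℝ)^a ≤
      64*C^2 * ((p:ℝ)^(-(3:ℝ)/2) * ((2:ℝ)^((3:ℝ)/2) * ((2:ℝ)^(-(3:ℝ)/4))^a)) := by
  set M : ℝ := (p:ℝ)^a with hMdef
  have hp0 : (0:ℝ) < p := by positivity
  have hM : 0 < M := by positivity
  have hm : 2 ≤ p^a := by
    calc 2 ≤ 2^a := Nat.one_lt_two_pow_iff.mpr (by omega)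
    _ ≤ p^a := Nat.pow_le_pow_left hp a
  have hcast : ((p^a : ℕ) : ℝ) = M := by push_cast; rfl
  have hlog : Real.log ((p^a : ℕ) : ℝ) ≤ 8 * M^((1:ℝ)/8) := by
    have := Real.log_le_rpow_div (x := ((p^a : ℕ):ℝ)) (by positivity) (by norm_num : (0:ℝ) < 1/8)
    rw [hcast] at this ⊢; linarith
  have h1 : f (p^a)^2 ≤ (C * Real.log ((p^a:ℕ):ℝ))^2 := by
    rw [← sq_abs]; exact pow_le_pow_left₀ (abs_nonneg _) (hf _ hm) 2
  have hlognn : 0 ≤ Real.log ((p^a : ℕ) : ℝ) :=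
    Real.log_nonneg (by exact_mod_cast Nat.one_le_of_lt hm)
  have h2 : (C * Real.log ((p^a:ℕ):ℝ))^2 ≤ (C * (8 * M^((1:ℝ)/8)))^2 :=
    pow_le_pow_left₀ (by positivity) (mul_le_mul_of_nonneg_left hlog hC) 2
  have h3 : (C * (8 * M^((1:ℝ)/8)))^2 = 64 * C^2 * M^((1:ℝ)/4) := by
    rw [mul_pow, mul_pow, ← Real.rpow_natCast (M^((1:ℝ)/8)) 2, ← Real.rpow_mul hM.le]
    norm_num; ring
  have h5 : 64 * C^2 * M^((1:ℝ)/4) / M = 64 * C^2 * M^(-(3:ℝ)/4) := by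
    rw [mul_div_assoc, show (-(3:ℝ)/4) = 1/4 - 1 by norm_num, Real.rpow_sub hM, Real.rpow_one]
  calc f (p^a)^2 / M ≤ (64 * C^2 * M^((1:ℝ)/4)) / M := by gcongr; linarith [h1.trans h2, h3]
    _ = 64 * C^2 * M^(-(3:ℝ)/4) := h5
    _ ≤ 64*C^2 * ((p:ℝ)^(-(3:ℝ)/2) * ((2:ℝ)^((3:ℝ)/2) * ((2:ℝ)^(-(3:ℝ)/4))^a)) :=
      mul_le_mul_of_nonneg_left (pbound p a hp ha) (by positivity)

theorem additive_variance_reduction (f : ℕ → ℝ)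
    (hadd : ∀ a b : ℕ, Nat.Coprime a b → f (a * b) = f a + f b)
    (hbound : ∃ C : ℝ, ∀ m : ℕ, 2 ≤ m → |f m| ≤ C * Real.log m) :
    ∃ C : ℝ, ∀ n : ℕ, 2 ≤ n →
      |(∑ q ∈ ppow n, (f (q.1 ^ q.2)) ^ 2 / (q.1 : ℝ) ^ q.2)
        - ∑ p ∈ primesLE n, (f p) ^ 2 / p| ≤ C := by
  obtain ⟨C₀, hC₀⟩ := hbound
  set C : ℝ := max C₀ 0 with hCdef
  have hC : 0 ≤ C := le_max_right _ _
  have hf : ∀ m : ℕ, 2 ≤ m → |f m| ≤ C * Real.log m := by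
    intro m hm
    refine (hC₀ m hm).trans (mul_le_mul_of_nonneg_right (le_max_left _ _) ?_)
    exact Real.log_nonneg (by exact_mod_cast Nat.one_le_of_lt hm)
  set g : ℕ → ℝ := fun a => (a:ℝ)^(-(3:ℝ)/2) with hg
  set h : ℕ → ℝ := fun b => (2:ℝ)^((3:ℝ)/2) * ((2:ℝ)^(-(3:ℝ)/4))^b with hh
  have hgsum : Summable g := Real.summable_nat_rpow.mpr (by norm_num)
  have hr0 : (0:ℝ) ≤ (2:ℝ)^(-(3:ℝ)/4) := by positivity
  have hr1 : (2:ℝ)^(-(3:ℝ)/4) < 1 :=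
    Real.rpow_lt_one_of_one_lt_of_neg (by norm_num) (by norm_num)
  have hhsum : Summable h :=
    (summable_geometric_of_lt_one hr0 hr1).mul_left _
  have hgnn : ∀ a, 0 ≤ g a := fun a => by positivity
  have hhnn : ∀ b, 0 ≤ h b := fun b => by positivity
  refine ⟨64*C^2 * ((∑' a, g a) * (∑' b, h b)), ?_⟩
  intro n hn
  -- split the ppow sum
  set F : ℕ × ℕ → ℝ := fun q => (f (q.1 ^ q.2)) ^ 2 / (q.1 : ℝ) ^ q.2 with hF
  have hsplit : ∑ q ∈ ppow n, F q
      = (∑ q ∈ (ppow n).filter (fun q => q.2 = 1), F q)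
        + ∑ q ∈ (ppow n).filter (fun q => ¬ q.2 = 1), F q :=
    (Finset.sum_filter_add_sum_filter_not _ _ _).symm
  have h1 : ∑ q ∈ (ppow n).filter (fun q => q.2 = 1), F q
      = ∑ p ∈ primesLE n, (f p) ^ 2 / p := by
    refine Finset.sum_nbij' (i := fun q => q.1) (j := fun p => (p, 1)) ?_ ?_ ?_ ?_ ?_
    · intro q hq
      simp only [ppow, primesLE, Finset.mem_filter, Finset.mem_product, Finset.mem_range] at hq ⊢
      exact ⟨hq.1.1.1, hq.1.2.1⟩
    · intro p hp
      simp only [ppow, primesLE, Finset.mem_filter, Finset.mem_product, Finset.mem_range] at hp ⊢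
      exact ⟨⟨⟨hp.1, by omega⟩, hp.2, le_refl 1, by simpa using Nat.lt_succ_iff.mp hp.1⟩, trivial⟩
    · intro q hq
      simp only [ppow, Finset.mem_filter] at hq
      exact Prod.ext rfl hq.2.symm
    · intro p hp; rfl
    · intro q hq
      simp only [ppow, Finset.mem_filter] at hq
      simp [hF, hq.2]
  have key : |∑ q ∈ (ppow n).filter (fun q => ¬ q.2 = 1), F q|
      ≤ 64*C^2 * ((∑' a, g a) * (∑' b, h b)) := by
    refine (Finset.abs_sum_le_sum_abs _ _).trans ?_
    have step1 : ∑ q ∈ (ppow n).filter (fun q => ¬ q.2 = 1), |F q|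
        ≤ ∑ q ∈ (ppow n).filter (fun q => ¬ q.2 = 1), 64*C^2 * (g q.1 * h q.2) := by
      refine Finset.sum_le_sum ?_
      intro q hq
      simp only [ppow, Finset.mem_filter, Finset.mem_product, Finset.mem_range] at hq
      have hp2 : 2 ≤ q.1 := hq.1.2.1.two_le
      have ha2 : 2 ≤ q.2 := by omega
      have := termbound C hC f hf q.1 q.2 hp2 ha2
      rw [abs_of_nonneg (by positivity)]
      exact this
    refine step1.trans ?_
    have step2 : ∑ q ∈ (ppow n).filter (fun q => ¬ q.2 = 1), 64*C^2 * (g q.1 * h q.2)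
        ≤ ∑ q ∈ Finset.range (n+1) ×ˢ Finset.range (n+1), 64*C^2 * (g q.1 * h q.2) := by
      refine Finset.sum_le_sum_of_subset_of_nonneg ?_ ?_
      · exact (Finset.filter_subset _ _).trans (Finset.filter_subset _ _)
      · intro q _ _; positivity
    refine step2.trans ?_
    rw [← Finset.mul_sum, Finset.sum_product, ← Finset.sum_mul_sum]
    have hA : ∑ a ∈ Finset.range (n+1), g a ≤ ∑' a, g a :=
      Summable.sum_le_tsum _ (fun i _ => hgnn i) hgsum
    have hB : ∑ b ∈ Finset.range (n+1), h b ≤ ∑' b, h b :=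
      Summable.sum_le_tsum _ (fun i _ => hhnn i) hhsum
    have hGnn : 0 ≤ ∑' a, g a := tsum_nonneg hgnn
    have hBnn : 0 ≤ ∑ b ∈ Finset.range (n+1), h b := Finset.sum_nonneg fun i _ => hhnn i
    exact mul_le_mul_of_nonneg_left (mul_le_mul hA hB hBnn hGnn) (by positivity)
  rw [hsplit, h1, add_sub_cancel_left]
  exact key
end
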